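/- Let Γ be a consistent set of formulae and E(Γ) the set of consistent supersets of Γ. Then Δ is a maximal element of E(Γ) (under inclusion) if and only if: (i) Γ ⊆ Δ and Δ is consistent; (ii) whenever Δ ⊢ φ ∸ 2^{−n} for all n < ω, then φ ∈ Δ; and (iii) for all formulae φ, ψ, either φ ∸ ψ ∈ Δ or ψ ∸ φ ∈ Δ. -/

import Mathlib

/-- Formulae of continuous propositional logic over propositional variables `α`:
truncated subtraction `∸`, negation, and halving. -/
inductive CF (α : Type) : Type
  | var : α → CF α
  | sub : CF α → CF α → CF α
  | neg : CF α → CF α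
  | half : CF α → CF α

variable {α : Type}

/-- The axiom schemata A1–A6 of continuous propositional logic. -/
inductive CAx : CF α → Prop
  | a1 (φ ψ : CF α) : CAx ((φ.sub ψ).sub φ)
  | a2 (φ ψ χ : CF α) : CAx (((χ.sub φ).sub (χ.sub ψ)).sub (ψ.sub φ))
  | a3 (φ ψ : CF α) : CAx ((φ.sub (φ.sub ψ)).sub (ψ.sub (ψ.sub φ)))
  | a4 (φ ψ : CF α) : CAx ((φ.sub ψ).sub ((ψ.neg).sub (φ.neg)))
  | a5 (φ : CF α) : CAx ((φ.half).sub (φ.sub φ.half))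
  | a6 (φ : CF α) : CAx ((φ.sub φ.half).sub φ.half)

/-- Derivability with modus ponens as the only rule of inference. -/
inductive CDeriv : Set (CF α) → CF α → Prop
  | ax {Γ : Set (CF α)} {φ : CF α} : CAx φ → CDeriv Γ φ
  | hyp {Γ : Set (CF α)} {φ : CF α} : φ ∈ Γ → CDeriv Γ φ
  | mp {Γ : Set (CF α)} {φ ψ : CF α} : CDeriv Γ φ → CDeriv Γ (ψ.sub φ) →
      CDeriv Γ ψ

/-- A set of formulae is consistent if some formula is not provable from it. -/
def CConsistent (Γ : Set (CF α)) : Prop := ∃ φ : CF α, ¬ CDeriv Γ φ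

/-- The formula `1`, shorthand for `¬(φ ∸ φ)`. -/
def oneCF [Inhabited α] : CF α := ((CF.var (default : α)).sub (CF.var default)).neg

/-- The formula `2^{-n}`, i.e. `n`-fold halving of `1`. -/
def dyCF [Inhabited α] : ℕ → CF α
  | 0 => oneCF
  | n + 1 => (dyCF n).half

----------------------------------------------------------------
-- Derived machinery for continuous propositional logic
namespace CCal

variable {α : Type}

/-- `cimp a b` is the implication "`a → b`", i.e. the formula `b ∸ a`. -/
def cimp (a b : CF α) : CF α := b.sub a

local infixr:28 " ⤳ " => cimp

def cneg (a : CF α) : CF α := a.neg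

/-- strong conjunction `a ⊗ b = ¬(b → ¬a)` -/
def tensor (a b : CF α) : CF α := cneg (b ⤳ cneg a)

/-- weak (max) disjunction -/
def orL (a b : CF α) : CF α := (a ⤳ b) ⤳ b

/-- strong disjunction `a ⊕ b = ¬a → b` -/
def oplus (a b : CF α) : CF α := cneg a ⤳ b

variable {Γ : Set (CF α)} {a b c x y z u w φ ψ θ : CF α}

/-- modus ponens in implication form -/
theorem mp' (h1 : CDeriv Γ a) (h2 : CDeriv Γ (a ⤳ b)) : CDeriv Γ b :=
  CDeriv.mp h1 h2

theorem axK (a b : CF α) : CDeriv Γ (a ⤳ (b ⤳ a)) := CDeriv.ax (CAx.a1 a b)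

theorem axB (a b c : CF α) :
    CDeriv Γ ((a ⤳ b) ⤳ ((b ⤳ c) ⤳ (a ⤳ c))) := CDeriv.ax (CAx.a2 a b c)

theorem axL3 (a b : CF α) : CDeriv Γ (orL a b ⤳ orL b a) := CDeriv.ax (CAx.a3 a b)

theorem axL4 (a b : CF α) :
    CDeriv Γ ((cneg a ⤳ cneg b) ⤳ (b ⤳ a)) := CDeriv.ax (CAx.a4 a b)

theorem axA5 (φ : CF α) : CDeriv Γ ((φ.half ⤳ φ) ⤳ φ.half) := CDeriv.ax (CAx.a5 φ)

theorem axA6 (φ : CF α) : CDeriv Γ (φ.half ⤳ (φ.half ⤳ φ)) := CDeriv.ax (CAx.a6 φ)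

theorem syl (h1 : CDeriv Γ (a ⤳ b)) (h2 : CDeriv Γ (b ⤳ c)) :
    CDeriv Γ (a ⤳ c) := mp' h2 (mp' h1 (axB a b c))

theorem thmT (a b c : CF α) : CDeriv Γ (((a ⤳ b) ⤳ c) ⤳ (b ⤳ c)) :=
  mp' (axK b a) (axB b (a ⤳ b) c)

/-- assertion: `b → ((b→a)→a)` -/
theorem thmT2 (b a : CF α) : CDeriv Γ (b ⤳ ((b ⤳ a) ⤳ a)) :=
  mp' (axL3 a b) (thmT (a ⤳ b) b ((b ⤳ a) ⤳ a))

theorem thmC (a b c : CF α) :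
    CDeriv Γ ((a ⤳ (b ⤳ c)) ⤳ (b ⤳ (a ⤳ c))) := by
  have d : CDeriv Γ ((a ⤳ (b ⤳ c)) ⤳ (((b ⤳ c) ⤳ c) ⤳ (a ⤳ c))) :=
    axB a (b ⤳ c) c
  have f : CDeriv Γ ((((b ⤳ c) ⤳ c) ⤳ (a ⤳ c)) ⤳ (b ⤳ (a ⤳ c))) :=
    mp' (thmT2 b c) (axB b ((b ⤳ c) ⤳ c) (a ⤳ c))
  exact syl d f

theorem thmI (a : CF α) : CDeriv Γ (a ⤳ a) := by
  have step : CDeriv Γ ((a ⤳ (a ⤳ a)) ⤳ (a ⤳ a)) :=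
    mp' (axK a (a ⤳ (a ⤳ a))) (thmC a (a ⤳ (a ⤳ a)) a)
  exact mp' (axK a a) step

theorem crule (h : CDeriv Γ (a ⤳ (b ⤳ c))) : CDeriv Γ (b ⤳ (a ⤳ c)) :=
  mp' h (thmC a b c)

theorem sufC (h : CDeriv Γ (a ⤳ b)) : CDeriv Γ ((b ⤳ c) ⤳ (a ⤳ c)) :=
  mp' h (axB a b c)

theorem thmB (a b c : CF α) :
    CDeriv Γ ((b ⤳ c) ⤳ ((a ⤳ b) ⤳ (a ⤳ c))) :=
  mp' (axB a b c) (thmC (a ⤳ b) (b ⤳ c) (a ⤳ c))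

theorem preB (h : CDeriv Γ (b ⤳ c)) : CDeriv Γ ((a ⤳ b) ⤳ (a ⤳ c)) :=
  mp' h (thmB a b c)

theorem mpThm (h : CDeriv Γ a) : CDeriv Γ ((a ⤳ b) ⤳ b) :=
  mp' h (thmT2 a b)

theorem expl0 (a b : CF α) : CDeriv Γ (cneg a ⤳ (a ⤳ b)) :=
  syl (axK (cneg a) (cneg b)) (axL4 b a)

theorem expl1 (a b : CF α) : CDeriv Γ (a ⤳ (cneg a ⤳ b)) := crule (expl0 a b)

-- double negation elimination (machine-found proof)
theorem n36 (a c : CF α) : CDeriv Γ (a ⤳ ((cneg c ⤳ cneg a) ⤳ c)) :=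
  crule (axL4 c a)

theorem n84 (c b : CF α) :
    CDeriv Γ ((cneg c ⤳ cneg (b ⤳ b)) ⤳ c) := mp' (thmI b) (n36 (b ⤳ b) c)

theorem thm45 (x y z : CF α) :
    CDeriv Γ (((x ⤳ y) ⤳ z) ⤳ (cneg x ⤳ z)) :=
  mp' (expl0 x y) (axB (cneg x) (x ⤳ y) z)

theorem negneg1 (a : CF α) : CDeriv Γ (cneg (cneg a) ⤳ a) :=
  mp' (n84 a a) (thm45 (cneg a) (cneg (a ⤳ a)) a)

theorem negneg2 (a : CF α) : CDeriv Γ (a ⤳ cneg (cneg a)) :=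
  mp' (negneg1 (cneg a)) (axL4 (cneg (cneg a)) a)

/-- contraposition rule -/
theorem ctr (h : CDeriv Γ (a ⤳ b)) : CDeriv Γ (cneg b ⤳ cneg a) :=
  mp' (syl (syl (negneg1 a) h) (negneg2 b)) (axL4 (cneg a) (cneg b))

theorem thmCP (a b : CF α) : CDeriv Γ ((a ⤳ b) ⤳ (cneg b ⤳ cneg a)) :=
  syl (sufC (negneg1 a)) (syl (preB (negneg2 b)) (axL4 (cneg a) (cneg b)))

theorem thmCP1 (a b : CF α) : CDeriv Γ ((a ⤳ cneg b) ⤳ (b ⤳ cneg a)) :=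
  syl (thmCP a (cneg b)) (sufC (negneg2 b))

theorem importR (h : CDeriv Γ (c ⤳ (a ⤳ b))) : CDeriv Γ (tensor a c ⤳ b) := by
  have s2 : CDeriv Γ (c ⤳ (cneg b ⤳ cneg a)) := syl h (thmCP a b)
  have s3 : CDeriv Γ (cneg b ⤳ (c ⤳ cneg a)) := crule s2
  have s4 : CDeriv Γ (cneg (c ⤳ cneg a) ⤳ cneg (cneg b)) := ctr s3
  exact syl s4 (negneg1 b)

theorem exportR (h : CDeriv Γ (tensor a c ⤳ b)) : CDeriv Γ (c ⤳ (a ⤳ b)) := by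
  have s1 : CDeriv Γ (cneg b ⤳ cneg (cneg (c ⤳ cneg a))) := ctr h
  have s2 : CDeriv Γ (cneg b ⤳ (c ⤳ cneg a)) := syl s1 (negneg1 _)
  have s3 : CDeriv Γ (c ⤳ (cneg b ⤳ cneg a)) := crule s2
  exact syl s3 (axL4 b a)

theorem tensorMonoL (h : CDeriv Γ (a ⤳ b)) : CDeriv Γ (tensor a c ⤳ tensor b c) :=
  ctr (preB (ctr h))

theorem tensorMonoR (h : CDeriv Γ (c ⤳ b)) : CDeriv Γ (tensor a c ⤳ tensor a b) :=
  ctr (sufC h)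

theorem tensorComm (a b : CF α) : CDeriv Γ (tensor a b ⤳ tensor b a) :=
  ctr (thmCP1 a b)

theorem tensorProjL (a c : CF α) : CDeriv Γ (tensor a c ⤳ a) :=
  syl (ctr (axK (cneg a) c)) (negneg1 a)

theorem tensorProjR (a c : CF α) : CDeriv Γ (tensor a c ⤳ c) :=
  syl (tensorComm a c) (tensorProjL c a)

theorem orIL (a b : CF α) : CDeriv Γ (a ⤳ orL a b) := thmT2 a b

theorem orIR (a b : CF α) : CDeriv Γ (b ⤳ orL a b) := axK b (a ⤳ b)

theorem orElim (h1 : CDeriv Γ (a ⤳ c)) (h2 : CDeriv Γ (b ⤳ c)) :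
    CDeriv Γ (orL a b ⤳ c) := by
  have s1 : CDeriv Γ (orL a b ⤳ orL c b) := sufC (sufC h1)
  have s3 : CDeriv Γ (orL b c ⤳ orL c c) := sufC (sufC h2)
  have s4 : CDeriv Γ (orL c c ⤳ c) := mpThm (thmI c)
  exact syl s1 (syl (axL3 c b) (syl s3 s4))


/-- divisibility rule: if `u → v` then `u → ((v→u) ⊗ v)`. -/
theorem divRule (h : CDeriv Γ (u ⤳ v)) :
    CDeriv Γ (u ⤳ tensor (v ⤳ u) v) := by
  have d0 : CDeriv Γ (orL (cneg u) (cneg v) ⤳ cneg u) :=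
    orElim (thmI (cneg u)) (ctr h)
  have d1 : CDeriv Γ (u ⤳ cneg (orL (cneg u) (cneg v))) :=
    syl (negneg2 u) (ctr d0)
  have j2' : CDeriv Γ ((v ⤳ cneg (v ⤳ u)) ⤳ ((v ⤳ u) ⤳ cneg v)) :=
    thmCP1 v (v ⤳ u)
  have j1' : CDeriv Γ (((v ⤳ u) ⤳ cneg v) ⤳ ((cneg u ⤳ cneg v) ⤳ cneg v)) :=
    sufC (axL4 u v)
  have d2 : CDeriv Γ (cneg (orL (cneg u) (cneg v)) ⤳ tensor (v ⤳ u) v) :=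
    ctr (syl j2' j1')
  exact syl d1 d2

/-- residuation-style distribution: `a ⊗ (b ⊕ c) → ((b ⊗ a) ⊕ c)`. -/
theorem subdist (a b c : CF α) :
    CDeriv Γ (tensor a (oplus b c) ⤳ oplus (tensor b a) c) := by
  have s0 : CDeriv Γ (cneg (tensor b a) ⤳ (a ⤳ cneg b)) :=
    negneg1 (a ⤳ cneg b)
  have cc : CDeriv Γ (a ⤳ (cneg (tensor b a) ⤳ cneg b)) := crule s0
  have s1 : CDeriv Γ (a ⤳ ((cneg b ⤳ c) ⤳ (cneg (tensor b a) ⤳ c))) :=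
    syl cc (axB (cneg (tensor b a)) (cneg b) c)
  exact importR (crule s1)

/-- prelinearity: `(x→y) ∨ (y→x)`. -/
theorem thmPRE (x y : CF α) : CDeriv Γ (orL (x ⤳ y) (y ⤳ x)) := by
  set p := x ⤳ y with hp
  set q := y ⤳ x with hq
  set A := tensor q y with hA
  set s := orL (cneg x) (cneg y) with hs
  have cl1 : CDeriv Γ ((s ⤳ cneg x) ⤳ p) :=
    syl (sufC (orIR (cneg x) (cneg y))) (axL4 y x)
  have hAx : CDeriv Γ (A ⤳ x) := importR (thmT2 y x)
  have hAy : CDeriv Γ (A ⤳ y) := tensorProjR q y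
  have sA : CDeriv Γ (s ⤳ cneg A) := orElim (ctr hAx) (ctr hAy)
  have f1 : CDeriv Γ (cneg x ⤳ tensor (s ⤳ cneg x) s) :=
    divRule (orIL (cneg x) (cneg y))
  have flc : CDeriv Γ (cneg x ⤳ tensor p (cneg A)) :=
    syl f1 (syl (tensorMonoL cl1) (tensorMonoR sA))
  have fl : CDeriv Γ ((cneg A ⤳ cneg p) ⤳ x) :=
    syl (syl (negneg2 (cneg A ⤳ cneg p)) (ctr flc)) (negneg1 x)
  have a1 : CDeriv Γ ((p ⤳ q) ⤳ oplus q (cneg p)) := thmCP p q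
  have a2 : CDeriv Γ (tensor y (p ⤳ q) ⤳ tensor y (oplus q (cneg p))) :=
    tensorMonoR a1
  have a3 : CDeriv Γ (tensor y (oplus q (cneg p)) ⤳ oplus (tensor q y) (cneg p)) :=
    subdist y q (cneg p)
  have chain : CDeriv Γ (tensor y (p ⤳ q) ⤳ x) := syl a2 (syl a3 fl)
  exact exportR chain

/-- `φ → half φ` -/
theorem thmPH (φ : CF α) : CDeriv Γ (φ ⤳ φ.half) :=
  mp' (syl (ctr (axA5 φ)) (ctr (axK φ φ.half))) (axL4 φ.half φ)

/-- half-splitting: `φ → (half φ ⊗ half φ)` -/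
theorem hsplit (φ : CF α) : CDeriv Γ (φ ⤳ tensor φ.half φ.half) :=
  syl (divRule (thmPH φ)) (tensorMonoL (axA5 φ))

/-- associativity of ⊗ -/
theorem assoc1 (a b c : CF α) :
    CDeriv Γ (tensor a (tensor b c) ⤳ tensor (tensor a b) c) := by
  set T := tensor (tensor a b) c with hT
  have e1 : CDeriv Γ (c ⤳ (tensor a b ⤳ T)) := exportR (thmI T)
  have e2 : CDeriv Γ (tensor a b ⤳ (c ⤳ T)) := crule e1
  have e3 : CDeriv Γ (b ⤳ (a ⤳ (c ⤳ T))) := exportR e2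
  have e4 : CDeriv Γ (b ⤳ (c ⤳ (a ⤳ T))) := mp' e3 (preB (thmC a c T))
  have e5 : CDeriv Γ (tensor c b ⤳ (a ⤳ T)) := importR e4
  have e6 : CDeriv Γ (tensor b c ⤳ (a ⤳ T)) := syl (tensorComm b c) e5
  exact importR e6

theorem assoc2 (a b c : CF α) :
    CDeriv Γ (tensor (tensor a b) c ⤳ tensor a (tensor b c)) := by
  set T := tensor a (tensor b c) with hT
  have f1 : CDeriv Γ (tensor b c ⤳ (a ⤳ T)) := exportR (thmI T)
  have f2 : CDeriv Γ (c ⤳ (b ⤳ (a ⤳ T))) := exportR f1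
  have g1 : CDeriv Γ (b ⤳ (c ⤳ (a ⤳ T))) := crule f2
  have g2 : CDeriv Γ (b ⤳ (a ⤳ (c ⤳ T))) := mp' g1 (preB (thmC c a T))
  have g3 : CDeriv Γ (tensor a b ⤳ (c ⤳ T)) := importR g2
  have g4 : CDeriv Γ (tensor c (tensor a b) ⤳ T) := importR g3
  exact syl (tensorComm (tensor a b) c) g4


section Pow
variable [Inhabited α]

/-- a provable "true" formula -/
def ttCF : CF α := (CF.var default).sub (CF.var default)

theorem ttDeriv : CDeriv Γ (ttCF : CF α) := thmI (CF.var default)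

/-- `n`-fold strong conjunction of `θ` with itself -/
def cpow (θ : CF α) : ℕ → CF α
  | 0 => ttCF
  | n + 1 => tensor θ (cpow θ n)

theorem tensTT (x : CF α) : CDeriv Γ (x ⤳ tensor ttCF x) := by
  have t1 : CDeriv Γ (x ⤳ ((x ⤳ cneg ttCF) ⤳ cneg ttCF)) := thmT2 x (cneg ttCF)
  have t2 : CDeriv Γ (((x ⤳ cneg ttCF) ⤳ cneg ttCF) ⤳ (ttCF ⤳ cneg (x ⤳ cneg ttCF))) :=
    thmCP1 (x ⤳ cneg ttCF) ttCF
  exact syl t1 (syl t2 (mpThm ttDeriv))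

theorem tensTT2 (x : CF α) : CDeriv Γ (x ⤳ tensor x ttCF) :=
  syl (tensTT x) (tensorComm ttCF x)

theorem powSplit (θ : CF α) : ∀ n m : ℕ,
    CDeriv Γ (cpow θ (n + m) ⤳ tensor (cpow θ n) (cpow θ m))
  | 0, m => by simpa [Nat.zero_add, cpow] using tensTT (Γ := Γ) (cpow θ m)
  | n + 1, m => by
      rw [Nat.succ_add]
      exact syl (tensorMonoR (powSplit θ n m)) (assoc1 θ (cpow θ n) (cpow θ m))

theorem powMono (h : CDeriv Γ (x ⤳ y)) : ∀ k : ℕ,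
    CDeriv Γ (cpow x k ⤳ cpow y k)
  | 0 => thmI _
  | k + 1 => syl (tensorMonoL h) (tensorMonoR (powMono h k))

theorem powProj (θ : CF α) (k : ℕ) : CDeriv Γ (cpow θ (k+1) ⤳ cpow θ k) :=
  tensorProjR θ (cpow θ k)

theorem powLe (θ : CF α) : ∀ N n : ℕ, n ≤ N → CDeriv Γ (cpow θ N ⤳ cpow θ n)
  | 0, n, h => by rw [Nat.le_zero.mp h]; exact thmI _
  | N + 1, n, h => by
      rcases Nat.eq_or_lt_of_le h with rfl | h'
      · exact thmI _
      · exact syl (powProj θ N) (powLe θ N n (Nat.lt_succ_iff.mp h'))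

theorem powJoin (θ : CF α) : ∀ n m : ℕ,
    CDeriv Γ (tensor (cpow θ n) (cpow θ m) ⤳ cpow θ (n + m))
  | 0, m => by simpa [Nat.zero_add, cpow] using tensorProjR (Γ := Γ) (ttCF : CF α) (cpow θ m)
  | n + 1, m => by
      rw [Nat.succ_add]
      exact syl (assoc2 θ (cpow θ n) (cpow θ m)) (tensorMonoR (powJoin θ n m))

theorem powDouble (h : CDeriv Γ (x ⤳ tensor y y)) : ∀ k : ℕ,
    CDeriv Γ (cpow x k ⤳ cpow y (2 * k))
  | 0 => thmI _
  | k + 1 => by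
      rw [Nat.mul_succ]
      exact syl (tensorMonoL h)
        (syl (tensorMonoR (powDouble h k)) (assoc2 y y (cpow y (2 * k))))

theorem dyPow : ∀ m : ℕ, CDeriv Γ (dyCF 1 ⤳ cpow (dyCF (m + 1)) (2 ^ m))
  | 0 => by simpa [cpow] using tensTT2 (Γ := Γ) (dyCF 1)
  | m + 1 => by
      have step : CDeriv Γ (cpow (dyCF (m+1)) (2^m) ⤳ cpow (dyCF (m+2)) (2*2^m)) :=
        powDouble (hsplit (dyCF (m+1))) (2^m)
      have : (2:ℕ) ^ (m+1) = 2 * 2 ^ m := by ring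
      rw [this]
      exact syl (dyPow m) step

theorem dyDown (h : CDeriv Γ (dyCF (n+1) : CF α)) : CDeriv Γ (dyCF n) :=
  mp' h (mp' h (axA6 (dyCF n)))

theorem dyZero : ∀ n : ℕ, CDeriv Γ (dyCF n : CF α) → CDeriv Γ (oneCF : CF α)
  | 0, h => h
  | n + 1, h => dyZero n (dyDown h)

theorem explode (h : CDeriv Γ (oneCF : CF α)) (ψ : CF α) : CDeriv Γ ψ :=
  mp' h (mp' ttDeriv (expl1 ttCF ψ))

end Pow

theorem derivMono {Γ Γ' : Set (CF α)} (hs : Γ ⊆ Γ') {φ : CF α}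
    (h : CDeriv Γ φ) : CDeriv Γ' φ := by
  induction h with
  | ax h => exact .ax h
  | hyp h => exact .hyp (hs h)
  | mp _ _ ih1 ih2 => exact .mp ih1 ih2

/-- deduction theorem -/
theorem dt [Inhabited α] {Δ : Set (CF α)} {θ ψ : CF α}
    (h : CDeriv (Δ ∪ {θ}) ψ) : ∃ n : ℕ, CDeriv Δ (cpow θ n ⤳ ψ) := by
  have key : ∀ (S : Set (CF α)) (χ : CF α), CDeriv S χ → S = Δ ∪ {θ} →
      ∃ n : ℕ, CDeriv Δ (cpow θ n ⤳ χ) := by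
    intro S χ h
    induction h with
    | ax hφ => exact fun _ => ⟨0, mp' (.ax hφ) (axK _ _)⟩
    | hyp hm =>
        intro hS
        subst hS
        rcases hm with hm | hm
        · exact ⟨0, mp' (.hyp hm) (axK _ _)⟩
        · rw [Set.mem_singleton_iff] at hm
          subst hm
          exact ⟨1, tensorProjL _ ttCF⟩
    | mp h1 h2 ih1 ih2 =>
        intro hS
        obtain ⟨n1, d1⟩ := ih1 hS
        obtain ⟨n2, d2⟩ := ih2 hS
        exact ⟨n1 + n2, syl (powSplit θ n1 n2) (syl (tensorMonoL d1) (importR d2))⟩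
  exact key _ _ h rfl

theorem notCon_iff {Γ : Set (CF α)} : ¬ CConsistent Γ ↔ ∀ ψ : CF α, CDeriv Γ ψ := by
  simp [CConsistent]

theorem inconsistent [Inhabited α] (hΔ : CConsistent Γ)
    (h : CDeriv Γ (oneCF : CF α)) : False := by
  obtain ⟨ψ0, hψ0⟩ := hΔ
  exact hψ0 (explode h ψ0)

/-- Lemma A: if `Δ ⊢ φ ∸ 2^{-n}` for all `n`, then `Δ ∪ {φ}` is consistent. -/
theorem lemmaA [Inhabited α] {Δ : Set (CF α)} {φ : CF α} (hΔ : CConsistent Δ)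
    (h : ∀ n : ℕ, CDeriv Δ (φ.sub (dyCF n))) : CConsistent (Δ ∪ {φ}) := by
  by_contra hc
  obtain ⟨n, d⟩ := dt (notCon_iff.1 hc oneCF)
  have c1 : CDeriv Δ (cpow (dyCF (n+1)) n ⤳ cpow φ n) := powMono (h (n+1)) n
  have c2 : CDeriv Δ (dyCF 1 ⤳ cpow (dyCF (n+1)) (2^n)) := dyPow n
  have c3 : CDeriv Δ (cpow (dyCF (n+1)) (2^n) ⤳ cpow (dyCF (n+1)) n) :=
    powLe _ _ _ (Nat.le_of_lt (Nat.lt_two_pow_self (n := n)))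
  have dchain : CDeriv Δ (dyCF 1 ⤳ oneCF) := syl c2 (syl c3 (syl c1 d))
  have c4 : CDeriv Δ (dyCF 1) := mp' dchain (axA5 oneCF)
  exact inconsistent hΔ (dyZero 1 c4)

/-- or-monotonicity in the left argument -/
theorem orMonoL (h : CDeriv Γ (x ⤳ y)) : CDeriv Γ (orL x w ⤳ orL y w) :=
  sufC (sufC h)

/-- from `u ∨ w` conclude `(u ⊗ u) ∨ w` -/
theorem or2 (h : CDeriv Γ (orL u w)) : CDeriv Γ (orL (tensor u u) w) := by
  set W := orL (tensor u u) w with hW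
  have i1 : CDeriv Γ (w ⤳ W) := orIR (tensor u u) w
  have g1 : CDeriv Γ (u ⤳ (u ⤳ tensor u u)) := exportR (thmI (tensor u u))
  have g2 : CDeriv Γ (tensor u u ⤳ W) := orIL (tensor u u) w
  have i2 : CDeriv Γ (u ⤳ (u ⤳ W)) := mp' g1 (preB (preB g2))
  have k1 : CDeriv Γ (w ⤳ (u ⤳ W)) := syl i1 (axK W u)
  have k2 : CDeriv Γ (orL u w ⤳ (u ⤳ W)) := orElim i2 k1
  have i3 : CDeriv Γ (u ⤳ (orL u w ⤳ W)) := crule k2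
  have i4 : CDeriv Γ (w ⤳ (orL u w ⤳ W)) := syl i1 (axK W (orL u w))
  exact mp' h (mp' h (orElim i3 i4))

/-- iterated squaring -/
def iterSq (u : CF α) : ℕ → CF α
  | 0 => u
  | j + 1 => tensor (iterSq u j) (iterSq u j)

theorem orSq (h : CDeriv Γ (orL u w)) : ∀ j : ℕ, CDeriv Γ (orL (iterSq u j) w)
  | 0 => h
  | j + 1 => or2 (orSq h j)

theorem iterSqPow [Inhabited α] (u : CF α) : ∀ j : ℕ,
    CDeriv Γ (iterSq u j ⤳ cpow u (2 ^ j))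
  | 0 => by simpa [cpow, iterSq] using tensTT2 (Γ := Γ) u
  | j + 1 => by
      have b1 : CDeriv Γ (iterSq u (j+1) ⤳ tensor (cpow u (2^j)) (cpow u (2^j))) :=
        syl (tensorMonoL (iterSqPow u j)) (tensorMonoR (iterSqPow u j))
      have : (2:ℕ) ^ (j+1) = 2 ^ j + 2 ^ j := by ring
      rw [this]
      exact syl b1 (powJoin u (2^j) (2^j))

theorem orPow [Inhabited α] (h : CDeriv Γ (orL u w)) (n : ℕ) :
    CDeriv Γ (orL (cpow u n) w) := by
  have h1 : CDeriv Γ (orL (iterSq u n) w) := orSq h n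
  have h2 : CDeriv Γ (iterSq u n ⤳ cpow u n) :=
    syl (iterSqPow u n) (powLe _ _ _ (Nat.le_of_lt (Nat.lt_two_pow_self (n := n))))
  exact mp' h1 (orMonoL h2)

/-- Lemma B: one of `Δ ∪ {φ ∸ ψ}`, `Δ ∪ {ψ ∸ φ}` is consistent. -/
theorem lemmaB [Inhabited α] {Δ : Set (CF α)} (hΔ : CConsistent Δ) (φ ψ : CF α) :
    CConsistent (Δ ∪ {φ.sub ψ}) ∨ CConsistent (Δ ∪ {ψ.sub φ}) := by
  by_contra hc
  push_neg at hc
  obtain ⟨h1, h2⟩ := hc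
  obtain ⟨n, da⟩ := dt (notCon_iff.1 h1 oneCF)
  obtain ⟨m, db⟩ := dt (notCon_iff.1 h2 oneCF)
  -- φ.sub ψ = ψ ⤳ φ  and  ψ.sub φ = φ ⤳ ψ
  have z0 : CDeriv Δ (orL (ψ.sub φ) (φ.sub ψ)) := thmPRE φ ψ
  have z1 : CDeriv Δ (orL (cpow (ψ.sub φ) m) (φ.sub ψ)) := orPow z0 m
  have z2 : CDeriv Δ (orL (φ.sub ψ) (cpow (ψ.sub φ) m)) :=
    mp' z1 (axL3 (cpow (ψ.sub φ) m) (φ.sub ψ))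
  have z3 : CDeriv Δ (orL (cpow (φ.sub ψ) n) (cpow (ψ.sub φ) m)) := orPow z2 n
  have z4 : CDeriv Δ (orL (cpow (φ.sub ψ) n) (cpow (ψ.sub φ) m) ⤳ oneCF) :=
    orElim da db
  exact inconsistent hΔ (mp' z3 z4)

end CCal

/-- Characterization of maximal elements of the poset `E(Γ)` of consistent
supersets of a consistent `Γ`: `Δ` is maximal iff it contains `Γ`, is
consistent, is closed under the infinitary rule
`(∀ n, Δ ⊢ φ ∸ 2^{-n}) ⟹ φ ∈ Δ`, and compares every pair of formulae. -/
theorem maximal_consistent_characterization [Inhabited α]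
    (Γ Δ : Set (CF α)) (hΓ : CConsistent Γ) :
    ((Γ ⊆ Δ ∧ CConsistent Δ) ∧
      ∀ Γ' : Set (CF α), (Γ ⊆ Γ' ∧ CConsistent Γ') → Δ ⊆ Γ' → Γ' = Δ) ↔
    ((Γ ⊆ Δ ∧ CConsistent Δ) ∧
      (∀ φ : CF α, (∀ n : ℕ, CDeriv Δ (φ.sub (dyCF n))) → φ ∈ Δ) ∧
      (∀ φ ψ : CF α, φ.sub ψ ∈ Δ ∨ ψ.sub φ ∈ Δ)) := by
  constructor
  · rintro ⟨⟨hsub, hcons⟩, hmax⟩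
    refine ⟨⟨hsub, hcons⟩, ?_, ?_⟩
    · intro φ hφ
      have hA : CConsistent (Δ ∪ {φ}) := CCal.lemmaA hcons hφ
      have heq : Δ ∪ {φ} = Δ :=
        hmax (Δ ∪ {φ}) ⟨hsub.trans Set.subset_union_left, hA⟩ Set.subset_union_left
      have hm : φ ∈ Δ ∪ {φ} := Set.mem_union_right _ rfl
      rwa [heq] at hm
    · intro φ ψ
      rcases CCal.lemmaB hcons φ ψ with h | h
      · left
        have heq : Δ ∪ {φ.sub ψ} = Δ :=
          hmax _ ⟨hsub.trans Set.subset_union_left, h⟩ Set.subset_union_left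
        have hm : φ.sub ψ ∈ Δ ∪ {φ.sub ψ} := Set.mem_union_right _ rfl
        rwa [heq] at hm
      · right
        have heq : Δ ∪ {ψ.sub φ} = Δ :=
          hmax _ ⟨hsub.trans Set.subset_union_left, h⟩ Set.subset_union_left
        have hm : ψ.sub φ ∈ Δ ∪ {ψ.sub φ} := Set.mem_union_right _ rfl
        rwa [heq] at hm
  · rintro ⟨⟨hsub, hcons⟩, hclosed, htotal⟩
    refine ⟨⟨hsub, hcons⟩, ?_⟩
    rintro Γ' ⟨_, hΓ'cons⟩ hΔΓ'
    refine Set.Subset.antisymm ?_ hΔΓ'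
    intro χ hχ
    apply hclosed
    intro n
    rcases htotal χ (dyCF n) with hm | hm
    · exact CDeriv.hyp hm
    · exfalso
      have hd : CDeriv Γ' (dyCF n) := CDeriv.mp (.hyp hχ) (.hyp (hΔΓ' hm))
      exact CCal.inconsistent hΓ'cons (CCal.dyZero n hd)
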